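/- arXiv:1606.01493 — 3 statements merged into one kernel-verified Lean document; each statement's English description precedes it below -/
import Mathlib

section
/- Let d ≥ 3 and let α₁ ≥ α₂ ≥ ... ≥ α_d be a non-increasing sequence of positive integers with sum n. Then α₂ + 2α₃ + 3α₄ + ... + (d-1)α_d ≤ (1/2)(d-1)(n - (α₁ - α_d)), i.e., 2(α₂ + 2α₃ + ... + (d-1)α_d) ≤ (d-1)(n - α₁ + α_d). -/
/-- Key arithmetic inequality behind Lemma 2.1: for a non-increasing sequence
`α₁ ≥ ... ≥ α_d` of positive integers with sum `n` and `d ≥ 3`,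
`2(α₂ + 2α₃ + ... + (d-1)α_d) ≤ (d-1)(n - α₁ + α_d)`. -/
theorem schur_abelian_exponent_bound (d n : ℕ) (hd : 3 ≤ d)
    (α : Fin d → ℕ) (hpos : ∀ i, 1 ≤ α i) (hmono : Antitone α)
    (hsum : ∑ i, α i = n) :
    2 * ∑ i : Fin d, (i : ℕ) * α i ≤
      (d - 1) * (n - (α ⟨0, by omega⟩ - α ⟨d - 1, by omega⟩)) := by
  set i0 : Fin d := ⟨0, by omega⟩ with hi0
  set il : Fin d := ⟨d - 1, by omega⟩ with hil
  have hne : i0 ≠ il := by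
    simp [hi0, hil, Fin.ext_iff]; omega
  set S : Finset (Fin d) := (Finset.univ.erase i0).erase il with hS
  have hilmem : il ∈ Finset.univ.erase i0 := Finset.mem_erase.2 ⟨hne.symm, Finset.mem_univ _⟩
  -- decompositions of sums
  have hdec : ∀ F : Fin d → ℕ, ∑ i, F i = F i0 + (F il + ∑ i ∈ S, F i) := by
    intro F
    rw [hS, Finset.add_sum_erase _ _ hilmem, Finset.add_sum_erase _ _ (Finset.mem_univ i0)]
  have hcard : (S.card : ℕ) = d - 2 := by
    rw [hS, Finset.card_erase_of_mem hilmem, Finset.card_erase_of_mem (Finset.mem_univ i0),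
      Finset.card_univ, Fintype.card_fin]
    omega
  -- sum of indices over S
  have htot : 2 * ∑ i : Fin d, (i : ℕ) = d * (d - 1) := by
    rw [Fin.sum_univ_eq_sum_range (fun i => i), mul_comm, Finset.sum_range_id_mul_two]
  have hv0 : (i0 : ℕ) = 0 := rfl
  have hvl : (il : ℕ) = d - 1 := rfl
  have hsid : 2 * ∑ i ∈ S, (i : ℕ) = (d - 1) * (d - 2) := by
    have h1 := hdec (fun i => (i : ℕ))
    simp only [hv0, hvl] at h1
    have hprod : (d - 1) * (d - 2) + 2 * (d - 1) = d * (d - 1) := by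
      obtain ⟨k, rfl⟩ := Nat.exists_eq_add_of_le hd
      have e1 : 3 + k - 1 = k + 2 := by omega
      have e2 : 3 + k - 2 = k + 1 := by omega
      rw [e1, e2]; ring
    omega
  -- Chebyshev on S
  have hanti : AntivaryOn (fun i : Fin d => (i : ℕ)) α S := by
    intro i _ j _ h
    by_contra hc
    push_neg at hc
    exact absurd (hmono (le_of_lt (Fin.lt_iff_val_lt_val.2 hc))) (not_le.2 h)
  have hcheb := hanti.card_mul_sum_le_sum_mul_sum
  rw [hcard] at hcheb
  have hkey : 2 * ∑ i ∈ S, (i : ℕ) * α i ≤ (d - 1) * ∑ i ∈ S, α i := by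
    have h2 : (d - 2) * (2 * ∑ i ∈ S, (i : ℕ) * α i) ≤ (d - 2) * ((d - 1) * ∑ i ∈ S, α i) := by
      calc (d - 2) * (2 * ∑ i ∈ S, (i : ℕ) * α i)
          = 2 * ((d - 2) * ∑ i ∈ S, (i : ℕ) * α i) := by ring
        _ ≤ 2 * ((∑ i ∈ S, (i : ℕ)) * ∑ i ∈ S, α i) := by
            exact Nat.mul_le_mul_left 2 hcheb
        _ = (2 * ∑ i ∈ S, (i : ℕ)) * ∑ i ∈ S, α i := by ring
        _ = (d - 1) * (d - 2) * ∑ i ∈ S, α i := by rw [hsid]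
        _ = (d - 2) * ((d - 1) * ∑ i ∈ S, α i) := by ring
    exact Nat.le_of_mul_le_mul_left h2 (by omega)
  -- decompositions of the two α-sums
  have hda := hdec α
  have hdw := hdec (fun i => (i : ℕ) * α i)
  have hle : α il ≤ α i0 := hmono (by simp [hi0, hil, Fin.le_iff_val_le_val])
  -- rewrite RHS
  have hrw : n - (α i0 - α il) = 2 * α il + ∑ i ∈ S, α i := by omega
  have hlhs : 2 * ∑ i : Fin d, (i : ℕ) * α i
      = 2 * ((d - 1) * α il) + 2 * ∑ i ∈ S, (i : ℕ) * α i := by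
    rw [hdw]; simp only [hv0, hvl]; ring
  rw [hrw, hlhs]
  calc 2 * ((d - 1) * α il) + 2 * ∑ i ∈ S, (i : ℕ) * α i
      ≤ 2 * ((d - 1) * α il) + (d - 1) * ∑ i ∈ S, α i := Nat.add_le_add_left hkey _
    _ = (d - 1) * (2 * α il + ∑ i ∈ S, α i) := by ring
end

section
/- Let G be a finite abelian p-group of order p^n with G ≅ C_{p^{α₁}} × ... × C_{p^{α_d}}, α₁ ≥ ... ≥ α_d, minimally generated by d elements. Then |M(G)| ≤ p^{(1/2)(d-1)(n - (α₁ - α_d))}. -/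
/-- The Schur multiplier of a (finite) group `G`, realised as the second cohomology
group `H²(G, ℂˣ)` with trivial action (for finite `G` this is `H₂(G, ℤ)`). -/
abbrev SchurMultiplier (G : Type) [Group G] : Type :=
  groupCohomology.H2 (Rep.trivial ℤ G (Additive ℂˣ))

namespace SchurAux

open groupCohomology Finset

/-! ### ℂˣ is divisible, hence an injective ℤ-module -/

noncomputable instance : RootableBy ℂˣ ℕ :=
  rootableByOfPowLeftSurj _ _ (fun {n} hn u => by
    obtain ⟨z, hz⟩ := IsAlgClosed.exists_pow_nat_eq (u : ℂ) (Nat.pos_of_ne_zero hn)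
    have hz0 : z ≠ 0 := fun h => u.ne_zero (by simpa [h, zero_pow hn] using hz.symm)
    exact ⟨Units.mk0 z hz0, Units.ext (by simp [hz])⟩)

noncomputable instance : RootableBy ℂˣ ℤ := Group.rootableByIntOfRootableByNat ℂˣ

noncomputable instance : DivisibleBy (Additive ℂˣ) ℤ where
  div a n := Additive.ofMul (RootableBy.root (Additive.toMul a) n)
  div_zero a := congrArg Additive.ofMul (RootableBy.root_zero _)
  div_cancel a hn := by
    change _ • Additive.ofMul _ = a
    rw [← ofMul_zpow]
    exact congrArg Additive.ofMul (RootableBy.root_cancel _ hn)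

noncomputable instance : Module.Injective ℤ (Additive ℂˣ) :=
  (Module.Baer.of_divisible _).injective

/-! ### Symmetric 2-cocycles of abelian groups with injective coefficients
are coboundaries -/

section Cocycle

variable {G : Type} [CommGroup G] {M : Type} [AddCommGroup M]

theorem symm_mem_twoCoboundaries [Module.Injective ℤ M]
    (f : cocycles₂ (Rep.trivial ℤ G M))
    (hsymm : ∀ g h : G, f (g, h) = f (h, g)) :
    (f : G × G → M) ∈ coboundaries₂ (Rep.trivial ℤ G M) := by
  let F : G → G → M := fun g h => f (g, h)
  have hs : ∀ g h : G, F g h = F h g := hsymm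
  have hco : ∀ g h k : G, F (g * h) k + F g h = F h k + F g (h * k) := by
    intro g h k
    have := (mem_cocycles₂_iff (A := Rep.trivial ℤ G M) f.1).1 f.2 g h k
    simpa using this
  have hco' : ∀ g h k : G, F (g * h) k = F h k + F g (h * k) - F g h := by
    intro g h k; rw [eq_sub_iff_add_eq]; exact hco g h k
  have hone : ∀ g : G, F g 1 = F 1 1 := fun g => by
    have := cocycles₂_map_one_snd (A := Rep.trivial ℤ G M) f g
    simpa using this
  have hone' : ∀ g : G, F 1 g = F 1 1 :=
    fun g => cocycles₂_map_one_fst (A := Rep.trivial ℤ G M) f g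
  -- the extension `E = G × M` with addition twisted by `f`
  letI zE : Zero (G × M) := ⟨(1, - F 1 1)⟩
  letI aE : Add (G × M) := ⟨fun x y => (x.1 * y.1, x.2 + y.2 + F x.1 y.1)⟩
  letI nE : Neg (G × M) := ⟨fun x => (x.1⁻¹, - x.2 - F x.1 x.1⁻¹ - F 1 1)⟩
  letI : AddCommGroup (G × M) :=
  { add_assoc := by
      rintro ⟨a, x⟩ ⟨b, y⟩ ⟨c, z⟩
      refine Prod.ext (mul_assoc _ _ _) ?_
      show x + y + F a b + z + F (a * b) c = x + (y + z + F b c) + F a (b * c)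
      rw [hco' a b c]; abel
    zero_add := by
      rintro ⟨a, x⟩
      refine Prod.ext (one_mul _) ?_
      show - F 1 1 + x + F 1 a = x
      rw [hone' a]; abel
    add_zero := by
      rintro ⟨a, x⟩
      refine Prod.ext (mul_one _) ?_
      show x + - F 1 1 + F a 1 = x
      rw [hone a]; abel
    neg_add_cancel := by
      rintro ⟨a, x⟩
      refine Prod.ext (inv_mul_cancel _) ?_
      show - x - F a a⁻¹ - F 1 1 + x + F a⁻¹ a = - F 1 1
      rw [hs a⁻¹ a]; abel
    add_comm := by
      rintro ⟨a, x⟩ ⟨b, y⟩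
      refine Prod.ext (mul_comm _ _) ?_
      show x + y + F a b = y + x + F b a
      rw [hs a b]; abel
    nsmul := nsmulRec
    zsmul := zsmulRec }
  let ι : M →+ (G × M) :=
  { toFun := fun a => (1, a - F 1 1)
    map_zero' := by
      refine Prod.ext rfl ?_
      show (0 : M) - F 1 1 = - F 1 1
      abel
    map_add' := by
      intro a b
      refine Prod.ext (one_mul _).symm ?_
      show a + b - F 1 1 = (a - F 1 1) + (b - F 1 1) + F 1 1
      abel }
  have hι : Function.Injective ι := by
    intro a b hab
    have h2 := congrArg Prod.snd hab
    simpa [ι] using h2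
  obtain ⟨φ, hφ⟩ := Module.Injective.out (ι.toIntLinearMap) hι LinearMap.id
  let c : G → M := fun g => φ (g, (0 : M))
  have key : ∀ g h : G, F g h = c h - c (g * h) + c g := by
    intro g h
    have h1 : ((g, (0:M)) : G × M) + (h, (0:M)) = ((g*h, (0:M)) : G × M) + ι (F g h) := by
      refine Prod.ext ?_ ?_
      · show g * h = g * h * 1; rw [mul_one]
      · show (0:M) + 0 + F g h = 0 + (F g h - F 1 1) + F (g*h) 1
        rw [hone (g*h)]; abel
    have h2 := congrArg φ h1
    rw [map_add, map_add] at h2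
    have h3 : φ (ι (F g h)) = F g h := hφ (F g h)
    have h4 : c g + c h = c (g * h) + F g h := by
      simpa [c, h3] using h2
    calc F g h = c g + c h - c (g * h) := by
          rw [eq_sub_iff_add_eq, add_comm]; exact h4.symm
      _ = c h - c (g * h) + c g := by abel
  exact ⟨c, funext fun gh => by
    show c gh.2 - c (gh.1 * gh.2) + c gh.1 = F gh.1 gh.2
    exact (key gh.1 gh.2).symm⟩

/-! ### The alternation map -/

/-- The alternation of a 2-cocycle, as a plain function. -/
noncomputable def altF (f : cocycles₂ (Rep.trivial ℤ G M)) : G → G → M :=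
  fun g h => f (g, h) - f (h, g)

/-- The alternation of a 2-cocycle, as a linear map. -/
noncomputable def altMapL (G : Type) [CommGroup G] (M : Type) [AddCommGroup M] :
    cocycles₂ (Rep.trivial ℤ G M) →ₗ[ℤ] (G → G → M) where
  toFun := altF
  map_add' x y := by
    funext g h
    show (x (g, h) + y (g, h)) - (x (h, g) + y (h, g)) =
      (x (g, h) - x (h, g)) + (y (g, h) - y (h, g))
    abel
  map_smul' r x := by
    funext g h
    show r • x (g, h) - r • x (h, g) = r • (x (g, h) - x (h, g))
    rw [smul_sub]

theorem altMapL_apply (f : cocycles₂ (Rep.trivial ℤ G M)) :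
    altMapL G M f = altF f := rfl

theorem altF_coboundary (f : cocycles₂ (Rep.trivial ℤ G M))
    (hf : (f : G × G → M) ∈ coboundaries₂ (Rep.trivial ℤ G M)) : altF f = 0 := by
  obtain ⟨x, hx⟩ := hf
  funext g h
  have h1 : x h - x (g * h) + x g = f (g, h) := congrFun hx (g, h)
  have h2 : x g - x (h * g) + x h = f (h, g) := congrFun hx (h, g)
  show f (g, h) - f (h, g) = 0
  rw [← h1, ← h2, mul_comm h g]
  abel

theorem altF_biadd_left (f : cocycles₂ (Rep.trivial ℤ G M)) (a b c : G) :
    altF f (a * b) c = altF f a c + altF f b c := by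
  let F : G → G → M := fun g h => f (g, h)
  have hco : ∀ g h k : G, F (g * h) k + F g h = F h k + F g (h * k) := by
    intro g h k
    have := (mem_cocycles₂_iff (A := Rep.trivial ℤ G M) f.1).1 f.2 g h k
    simpa using this
  have e1 : F (a * b) c = F b c + F a (b * c) - F a b :=
    eq_sub_of_add_eq (hco a b c)
  have e2 : F c (a * b) = F (c * a) b + F c a - F a b := by
    rw [eq_sub_iff_add_eq, add_comm]; exact (hco c a b).symm
  have e3 : F a (b * c) = F (a * c) b + F a c - F c b := by
    rw [mul_comm b c, eq_sub_iff_add_eq, add_comm]; exact (hco a c b).symm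
  show F (a * b) c - F c (a * b) = (F a c - F c a) + (F b c - F c b)
  rw [e1, e2, e3, mul_comm c a]
  abel

theorem altF_antisymm (f : cocycles₂ (Rep.trivial ℤ G M)) (a b : G) :
    altF f a b = - altF f b a := by
  show f (a, b) - f (b, a) = -(f (b, a) - f (a, b)); abel

theorem altF_diag (f : cocycles₂ (Rep.trivial ℤ G M)) (a : G) :
    altF f a a = 0 := sub_self _

theorem altF_biadd_right (f : cocycles₂ (Rep.trivial ℤ G M)) (a b c : G) :
    altF f a (b * c) = altF f a b + altF f a c := by
  rw [altF_antisymm f a (b*c), altF_biadd_left, altF_antisymm f a b,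
    altF_antisymm f a c]
  abel

end Cocycle

/-! ### The induced injection on `H²` -/

section Psi

variable (G : Type) [CommGroup G] (M : Type) [AddCommGroup M] [Module.Injective ℤ M]

theorem H2π_surj : Function.Surjective (H2π (Rep.trivial ℤ G M)) :=
  (ModuleCat.epi_iff_surjective _).1 inferInstance

/-- The injection of `H²(G, M)` into bilinear alternating forms, for `G` abelian and
`M` an injective `ℤ`-module. -/
noncomputable def Psi : H2 (Rep.trivial ℤ G M) → (G → G → M) :=
  fun x => altF (Classical.choose (H2π_surj G M x))

theorem Psi_injective : Function.Injective (Psi G M) := by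
  intro x y hxy
  have hx := Classical.choose_spec (H2π_surj G M x)
  have hy := Classical.choose_spec (H2π_surj G M y)
  rw [← hx, ← hy, H2π_eq_iff]
  set f := Classical.choose (H2π_surj G M x)
  set g := Classical.choose (H2π_surj G M y)
  have h0 : altMapL G M (f - g) = 0 := by
    rw [map_sub, altMapL_apply, altMapL_apply, sub_eq_zero]; exact hxy
  refine symm_mem_twoCoboundaries (f - g) (fun a b => ?_)
  have := congrFun (congrFun h0 a) b
  rw [altMapL_apply] at this
  simpa [altF, sub_eq_zero] using this

theorem Psi_surj (x : H2 (Rep.trivial ℤ G M)) :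
    ∃ f : cocycles₂ (Rep.trivial ℤ G M), Psi G M x = altF f :=
  ⟨_, rfl⟩

end Psi

/-! ### Biadditive maps -/

section Biadd
variable {K : Type} [CommMonoid K] {M : Type} [AddCommGroup M]
variable {β : K → K → M}

theorem biadd_one_left (hb1 : ∀ a b c : K, β (a*b) c = β a c + β b c) (v : K) :
    β 1 v = 0 := by
  have := hb1 1 1 v
  rw [one_mul] at this
  exact left_eq_add.1 this

theorem biadd_one_right (hb2 : ∀ a b c : K, β a (b*c) = β a b + β a c) (v : K) :
    β v 1 = 0 := by
  have := hb2 v 1 1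
  rw [one_mul] at this
  exact left_eq_add.1 this

theorem biadd_pow_left (hb1 : ∀ a b c : K, β (a*b) c = β a c + β b c) (a v : K) (n : ℕ) :
    β (a ^ n) v = n • β a v := by
  induction n with
  | zero => simpa using biadd_one_left hb1 v
  | succ n ih => rw [pow_succ, hb1, ih, succ_nsmul]

theorem biadd_pow_right (hb2 : ∀ a b c : K, β a (b*c) = β a b + β a c) (a v : K) (n : ℕ) :
    β v (a ^ n) = n • β v a := by
  induction n with
  | zero => simpa using biadd_one_right hb2 v
  | succ n ih => rw [pow_succ, hb2, ih, succ_nsmul]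

theorem biadd_prod_left (hb1 : ∀ a b c : K, β (a*b) c = β a c + β b c)
    {ι : Type} (s : Finset ι) (w : ι → K) (v : K) :
    β (∏ i ∈ s, w i) v = ∑ i ∈ s, β (w i) v := by
  classical
  induction s using Finset.induction_on with
  | empty => simpa using biadd_one_left hb1 v
  | insert _ _ hx ih => rw [Finset.prod_insert hx, Finset.sum_insert hx, hb1, ih]

theorem biadd_prod_right (hb2 : ∀ a b c : K, β a (b*c) = β a b + β a c)
    {ι : Type} (s : Finset ι) (w : ι → K) (v : K) :
    β v (∏ i ∈ s, w i) = ∑ i ∈ s, β v (w i) := by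
  classical
  induction s using Finset.induction_on with
  | empty => simpa using biadd_one_right hb2 v
  | insert _ _ hx ih => rw [Finset.prod_insert hx, Finset.sum_insert hx, hb2, ih]

end Biadd

/-! ### Generators of a finite product of cyclic `p`-groups -/

section Gen

variable (p d : ℕ) [hp : Fact p.Prime] (α : Fin d → ℕ)

instance neZeroPPow (i : Fin d) : NeZero (p ^ α i) :=
  ⟨pow_ne_zero _ hp.out.ne_zero⟩

/-- generators of the product of cyclic groups -/
noncomputable def genK (i : Fin d) : ∀ j : Fin d, Multiplicative (ZMod (p ^ α j)) :=
  Pi.mulSingle i (Multiplicative.ofAdd (1 : ZMod (p ^ α i)))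

theorem ofAdd_one_pow (m : ℕ) (n : ℕ) :
    (Multiplicative.ofAdd (1 : ZMod m)) ^ n = Multiplicative.ofAdd ((n : ZMod m)) := by
  rw [← ofAdd_nsmul, nsmul_eq_mul, mul_one]

theorem genK_pow_card (i : Fin d) : (genK p d α i) ^ (p ^ α i) = 1 := by
  rw [genK, ← Pi.mulSingle_pow, ofAdd_one_pow, ZMod.natCast_self, ofAdd_zero,
    Pi.mulSingle_one]

theorem eq_prod_genK (u : ∀ j : Fin d, Multiplicative (ZMod (p ^ α j))) :
    u = ∏ i, (genK p d α i) ^ ((Multiplicative.toAdd (u i)).val) := by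
  conv_lhs => rw [← Finset.univ_prod_mulSingle u]
  refine Finset.prod_congr rfl (fun i _ => ?_)
  rw [genK, ← Pi.mulSingle_pow, ofAdd_one_pow (p ^ α i) _]
  congr 1
  rw [ZMod.natCast_rightInverse (Multiplicative.toAdd (u i)), ofAdd_toAdd]

theorem biadd_ext {M : Type} [AddCommGroup M]
    {β γ : (∀ j : Fin d, Multiplicative (ZMod (p ^ α j))) →
      (∀ j : Fin d, Multiplicative (ZMod (p ^ α j))) → M}
    (hb1 : ∀ a b c, β (a*b) c = β a c + β b c)
    (hb2 : ∀ a b c, β a (b*c) = β a b + β a c)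
    (hg1 : ∀ a b c, γ (a*b) c = γ a c + γ b c)
    (hg2 : ∀ a b c, γ a (b*c) = γ a b + γ a c)
    (h : ∀ i j, β (genK p d α i) (genK p d α j) = γ (genK p d α i) (genK p d α j)) :
    β = γ := by
  funext u v
  have expand : ∀ (δ : (∀ j : Fin d, Multiplicative (ZMod (p ^ α j))) →
      (∀ j : Fin d, Multiplicative (ZMod (p ^ α j))) → M),
      (∀ a b c, δ (a*b) c = δ a c + δ b c) → (∀ a b c, δ a (b*c) = δ a b + δ a c) →
      δ u v = ∑ i, ((Multiplicative.toAdd (u i)).val : ℕ) •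
        ∑ j, ((Multiplicative.toAdd (v j)).val : ℕ) • δ (genK p d α i) (genK p d α j) := by
    intro δ h1 h2
    conv_lhs => rw [eq_prod_genK p d α u, eq_prod_genK p d α v]
    rw [biadd_prod_left h1]
    refine Finset.sum_congr rfl fun i _ => ?_
    rw [biadd_pow_left h1]
    congr 1
    rw [biadd_prod_right h2]
    refine Finset.sum_congr rfl fun j _ => ?_
    rw [biadd_pow_right h2]
  rw [expand β hb1 hb2, expand γ hg1 hg2]
  simp only [h]

end Gen

/-! ### Arithmetic -/

theorem schur_aux_sum_lower (d : ℕ) (hd : 1 ≤ d) (a : ℕ → ℕ)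
    (hm : ∀ i j, i ≤ j → a j ≤ a i) :
    a 0 + (d - 1) * a (d - 1) ≤ ∑ j ∈ Finset.range d, a j := by
  induction d, hd using Nat.le_induction with
  | base => simp
  | succ d hd ih =>
    obtain ⟨c, rfl⟩ : ∃ c, d = c + 1 := ⟨d - 1, by omega⟩
    rw [Finset.sum_range_succ]
    simp only [Nat.add_sub_cancel] at *
    have h1 : a (c + 1) ≤ a c := hm _ _ (by omega)
    have h2 : c * a (c + 1) ≤ c * a c := Nat.mul_le_mul_left _ h1
    linarith [ih]

theorem schur_aux_main (d : ℕ) (hd : 1 ≤ d) (a : ℕ → ℕ)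
    (hm : ∀ i j, i ≤ j → a j ≤ a i) :
    2 * (∑ j ∈ Finset.range d, j * a j) + (d - 1) * a 0 ≤
      (d - 1) * (∑ j ∈ Finset.range d, a j) + (d - 1) * a (d - 1) := by
  induction d, hd using Nat.le_induction with
  | base => simp
  | succ d hd ih =>
    obtain ⟨c, rfl⟩ : ∃ c, d = c + 1 := ⟨d - 1, by omega⟩
    have hsub := schur_aux_sum_lower (c + 1) (by omega) a hm
    rw [Finset.sum_range_succ (fun j => j * a j) (c + 1), Finset.sum_range_succ a (c + 1)]
    simp only [Nat.add_sub_cancel] at *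
    linarith [ih, hsub]

end SchurAux

set_option maxHeartbeats 2000000

/-- Lemma 2.1: for a finite abelian p-group `G ≅ C_{p^{α₁}} × ... × C_{p^{α_d}}` of
order `p^n`, minimally generated by `d` elements,
`|M(G)| ≤ p^{(1/2)(d-1)(n - (α₁ - α_d))}` (stated with both sides squared). -/
theorem card_schurMultiplier_abelian_le (p n d : ℕ) (hp : p.Prime) (hd : 0 < d)
    (G : Type) [CommGroup G] [Finite G] (hG : IsPGroup p G)
    (hcard : Nat.card G = p ^ n) (hrank : Group.rank G = d)
    (α : Fin d → ℕ) (hmono : Antitone α) (hpos : ∀ i, 1 ≤ α i)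
    (hiso : Nonempty (G ≃* ∀ i : Fin d, Multiplicative (ZMod (p ^ α i)))) :
    Nat.card (SchurMultiplier G) ^ 2 ≤
      p ^ ((d - 1) * (n - (α ⟨0, hd⟩ - α ⟨d - 1, by omega⟩))) := by
  classical
  open SchurAux in
  obtain ⟨e⟩ := hiso
  haveI : Fact p.Prime := ⟨hp⟩
  set M := Additive ℂˣ
  let Φ := SchurAux.Psi G M
  -- properties of `Φ x` (pulled back along `e`)
  have hprops : ∀ x : groupCohomology.H2 (Rep.trivial ℤ G M),
      (∀ a b c : G, Φ x (a*b) c = Φ x a c + Φ x b c) ∧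
      (∀ a b c : G, Φ x a (b*c) = Φ x a b + Φ x a c) ∧
      (∀ a b : G, Φ x a b = - Φ x b a) ∧ (∀ a : G, Φ x a a = 0) := by
    intro x
    obtain ⟨f, hf⟩ := SchurAux.Psi_surj G M x
    refine ⟨?_, ?_, ?_, ?_⟩ <;> intros <;> rw [show Φ x = _ from hf]
    · exact SchurAux.altF_biadd_left f _ _ _
    · exact SchurAux.altF_biadd_right f _ _ _
    · exact SchurAux.altF_antisymm f _ _
    · exact SchurAux.altF_diag f _
  -- the pulled-back bilinear forms on `K`
  let β : groupCohomology.H2 (Rep.trivial ℤ G M) →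
      (∀ i : Fin d, Multiplicative (ZMod (p ^ α i))) →
      (∀ i : Fin d, Multiplicative (ZMod (p ^ α i))) → M :=
    fun x u v => Φ x (e.symm u) (e.symm v)
  have hβ1 : ∀ x a b c, β x (a*b) c = β x a c + β x b c := by
    intro x a b c
    show Φ x (e.symm (a*b)) _ = _
    rw [map_mul]
    exact (hprops x).1 _ _ _
  have hβ2 : ∀ x a b c, β x a (b*c) = β x a b + β x a c := by
    intro x a b c
    show Φ x _ (e.symm (b*c)) = _
    rw [map_mul]
    exact (hprops x).2.1 _ _ _
  -- the final injection into a finite product of roots of unity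
  have hmem : ∀ (x) (q : {q : Fin d × Fin d // q.1 < q.2}),
      (Additive.toMul (β x (SchurAux.genK p d α q.1.1) (SchurAux.genK p d α q.1.2)) : ℂˣ)
        ∈ rootsOfUnity (p ^ α q.1.2) ℂ := by
    intro x q
    rw [mem_rootsOfUnity]
    have h1 : (p ^ α q.1.2) • β x (SchurAux.genK p d α q.1.1) (SchurAux.genK p d α q.1.2)
        = 0 := by
      rw [← SchurAux.biadd_pow_right (hβ2 x), SchurAux.genK_pow_card]
      exact SchurAux.biadd_one_right (hβ2 x) _
    calc (Additive.toMul (β x _ _) : ℂˣ) ^ (p ^ α q.1.2)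
        = Additive.toMul ((p ^ α q.1.2) • β x (SchurAux.genK p d α q.1.1)
            (SchurAux.genK p d α q.1.2)) := (toMul_nsmul _ _).symm
      _ = 1 := by rw [h1]; rfl
  let J : groupCohomology.H2 (Rep.trivial ℤ G M) →
      ∀ q : {q : Fin d × Fin d // q.1 < q.2}, rootsOfUnity (p ^ α q.1.2) ℂ :=
    fun x q => ⟨_, hmem x q⟩
  have hJ : Function.Injective J := by
    intro x y hxy
    apply SchurAux.Psi_injective G M
    have hgen : ∀ i j, β x (SchurAux.genK p d α i) (SchurAux.genK p d α j)
        = β y (SchurAux.genK p d α i) (SchurAux.genK p d α j) := by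
      intro i j
      rcases lt_trichotomy i j with hij | hij | hij
      · have := congrFun hxy ⟨(i, j), hij⟩
        have h2 := congrArg (Subtype.val) this
        exact Additive.toMul.injective (Units.ext (congrArg Units.val h2))
      · subst hij
        show Φ x (e.symm _) (e.symm _) = Φ y (e.symm _) (e.symm _)
        rw [(hprops x).2.2.2, (hprops y).2.2.2]
      · have := congrFun hxy ⟨(j, i), hij⟩
        have h2 := congrArg (Subtype.val) this
        have h3 : β x (SchurAux.genK p d α j) (SchurAux.genK p d α i)
            = β y (SchurAux.genK p d α j) (SchurAux.genK p d α i) :=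
          Additive.toMul.injective (Units.ext (congrArg Units.val h2))
        show Φ x (e.symm _) (e.symm _) = Φ y (e.symm _) (e.symm _)
        rw [(hprops x).2.2.1, (hprops y).2.2.1]
        exact congrArg Neg.neg h3
    have hβeq : β x = β y :=
      SchurAux.biadd_ext p d α (hβ1 x) (hβ2 x) (hβ1 y) (hβ2 y) hgen
    funext a b
    have := congrFun (congrFun hβeq (e a)) (e b)
    simpa [β, MulEquiv.symm_apply_apply] using this
  -- cardinality bound
  have hcards : Nat.card (SchurMultiplier G)
      ≤ p ^ (∑ j : Fin d, (j : ℕ) * α j) := by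
    have h1 := Nat.card_le_card_of_injective J hJ
    refine h1.trans (le_of_eq ?_)
    rw [Nat.card_pi]
    have h2 : ∀ q : {q : Fin d × Fin d // q.1 < q.2},
        Nat.card (rootsOfUnity (p ^ α q.1.2) ℂ) = p ^ α q.1.2 := by
      intro q
      rw [Complex.card_rootsOfUnity]
    rw [Finset.prod_congr rfl (fun q _ => h2 q), Finset.prod_pow_eq_pow_sum]
    congr 1
    -- ∑ over pairs i < j of α j = ∑ j, j * α j
    rw [← Finset.sum_subtype
      (Finset.univ.filter (fun q : Fin d × Fin d => q.1 < q.2))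
      (by intro q; simp) (fun q : Fin d × Fin d => α q.2)]
    rw [Finset.sum_filter, Fintype.sum_prod_type, Finset.sum_comm]
    refine Finset.sum_congr rfl (fun j _ => ?_)
    have : ∀ i : Fin d, (if (i, j).1 < (i, j).2 then α (i, j).2 else 0)
        = if i < j then α j else 0 := fun i => rfl
    rw [Finset.sum_congr rfl (fun i _ => this i), Finset.sum_ite, Finset.sum_const,
      Finset.sum_const_zero, add_zero, smul_eq_mul]
    congr 1
    rw [show (Finset.filter (fun i : Fin d => i < j) Finset.univ) = Finset.Iio j from by
      ext i; simp, Fin.card_Iio]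
  -- identification of `n`
  have hnsum : ∑ i : Fin d, α i = n := by
    have h1 : Nat.card G = ∏ i : Fin d, p ^ α i := by
      rw [Nat.card_congr e.toEquiv, Nat.card_pi]
      refine Finset.prod_congr rfl (fun i _ => ?_)
      rw [Nat.card_congr (Multiplicative.toAdd (α := ZMod (p ^ α i))), Nat.card_zmod]
    rw [hcard, Finset.prod_pow_eq_pow_sum] at h1
    exact Nat.pow_right_injective hp.two_le h1.symm
  -- arithmetic
  let a : ℕ → ℕ := fun j => α ⟨min j (d - 1), by omega⟩
  have ha : ∀ (j : ℕ) (h : j < d), a j = α ⟨j, h⟩ := by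
    intro j h
    show α _ = α _
    congr 1
    exact Fin.ext (by simp; omega)
  have hma : ∀ i j, i ≤ j → a j ≤ a i := by
    intro i j hij
    exact hmono (by simp [Fin.mk_le_mk]; omega)
  have hsum1 : ∑ j : Fin d, (j : ℕ) * α j = ∑ j ∈ Finset.range d, j * a j := by
    rw [Finset.sum_range fun j => j * a j]
    refine Finset.sum_congr rfl (fun j _ => ?_)
    rw [ha j.val j.isLt]
  have hsum2 : ∑ j ∈ Finset.range d, a j = n := by
    rw [← hnsum, Finset.sum_range fun j => a j]
    exact Finset.sum_congr rfl (fun j _ => by rw [ha j.val j.isLt])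
  have hmain := SchurAux.schur_aux_main d hd a hma
  rw [hsum2] at hmain
  -- final exponent manipulation
  have ha0 : a 0 = α ⟨0, hd⟩ := ha 0 hd
  have had : a (d - 1) = α ⟨d - 1, by omega⟩ := ha (d - 1) (by omega)
  have hlead : α ⟨d - 1, by omega⟩ ≤ α ⟨0, hd⟩ := hmono (by simp [Fin.mk_le_mk])
  have hn0 : α ⟨0, hd⟩ ≤ n := by
    rw [← hnsum]
    exact Finset.single_le_sum (f := fun i => α i) (fun _ _ => Nat.zero_le _)
      (Finset.mem_univ _)
  have hexp' : ∀ (S a0 ad nn c : ℕ), 2 * S + c * a0 ≤ c * nn + c * ad → ad ≤ a0 →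
      a0 ≤ nn → 2 * S ≤ c * (nn - (a0 - ad)) := by
    intro S a0 ad nn c h1 h2 h3
    obtain ⟨k, rfl⟩ : ∃ k, a0 = ad + k := ⟨a0 - ad, by omega⟩
    obtain ⟨m, rfl⟩ : ∃ m, nn = m + k := ⟨nn - k, by omega⟩
    have hred : m + k - (ad + k - ad) = m := by omega
    rw [hred]
    rw [Nat.mul_add, Nat.mul_add] at h1
    linarith
  have hexp : 2 * (∑ j : Fin d, (j : ℕ) * α j)
      ≤ (d - 1) * (n - (α ⟨0, hd⟩ - α ⟨d - 1, by omega⟩)) := by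
    rw [hsum1]
    rw [ha0, had] at hmain
    exact hexp' _ _ _ _ _ hmain hlead hn0
  calc Nat.card (SchurMultiplier G) ^ 2
      ≤ (p ^ (∑ j : Fin d, (j : ℕ) * α j)) ^ 2 := Nat.pow_le_pow_left hcards 2
    _ = p ^ (2 * (∑ j : Fin d, (j : ℕ) * α j)) := by rw [← pow_mul, mul_comm]
    _ ≤ p ^ ((d - 1) * (n - (α ⟨0, hd⟩ - α ⟨d - 1, by omega⟩))) :=
        Nat.pow_le_pow_right hp.one_lt.le hexp
end

section
/- Let d, n, k, e, δ be natural numbers with d ≥ δ ≥ 2, k ≥ 1, and suppose there exist integers α₁ ≥ α₂ ≥ ... ≥ α_d ≥ 1 with α₁ + ... + α_d = n - k and e = α₁. Then (1/2)d(n-k-e) + (δ-1)k - (δ-2) ≤ (1/2)(d-1)(n+k-2) + 1. -/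
/-- Arithmetic core of the derivation of Theorem 1.1 from the Ellis–Wiegold bound:
if `d ≥ δ ≥ 2`, `k ≥ 1`, and there are integers `α₁ ≥ ... ≥ α_d ≥ 1` with sum `n - k`
and `e = α₁`, then `(1/2)d(n-k-e) + (δ-1)k - (δ-2) ≤ (1/2)(d-1)(n+k-2) + 1`
(stated multiplied through by 2). -/
theorem ellis_wiegold_exponent_le (d n k e δ : ℕ) (hδ : 2 ≤ δ) (hdδ : δ ≤ d)
    (hk : 1 ≤ k) (α : Fin d → ℤ) (hmono : Antitone α) (hpos : ∀ i, 1 ≤ α i)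
    (hsum : ∑ i, α i = (n : ℤ) - k) (he : (e : ℤ) = α ⟨0, by omega⟩) :
    (d : ℤ) * ((n : ℤ) - k - e) + 2 * ((δ : ℤ) - 1) * k - 2 * ((δ : ℤ) - 2) ≤
      ((d : ℤ) - 1) * ((n : ℤ) + k - 2) + 2 := by
  have hd2 : 2 ≤ d := le_trans hδ hdδ
  have h1 : (n : ℤ) - k ≤ (d : ℤ) * e := by
    rw [← hsum, he]
    calc ∑ i, α i ≤ ∑ _i : Fin d, α ⟨0, by omega⟩ :=
          Finset.sum_le_sum (fun i _ => hmono (by simp [Fin.le_def]))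
      _ = (d : ℤ) * α ⟨0, by omega⟩ := by
          rw [Finset.sum_const, Finset.card_univ, Fintype.card_fin, nsmul_eq_mul]
  have h2 : ((δ : ℤ) - 1) * ((k : ℤ) - 1) ≤ ((d : ℤ) - 1) * ((k : ℤ) - 1) := by
    apply mul_le_mul_of_nonneg_right <;> [skip; skip] <;>
      simp only [sub_le_sub_iff_right, sub_nonneg] <;> exact_mod_cast (by assumption)
  -- S = n - k ≥ e + (d-1) not needed; combine h1, h2
  have hdk : (2:ℤ) ≤ d := by exact_mod_cast hd2
  have hk1 : (1:ℤ) ≤ k := by exact_mod_cast hk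
  nlinarith [h1, h2]
end
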